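/- Let F be Thompson's group with generators x₀, x₁, and let H, L be integers with H ≥ 2, L ≠ 0, and H + L ≤ 0 (so that x₁⁻¹x₀ᴴx₁ᴸ contains a forbidden subword). Then the identity x₁⁻¹ x₀ᴴ x₁ᴸ = x₀ᴴ x₁^{-H+1} x₀⁻¹ x₁⁻¹ x₀ x₁^{H+L-1} holds in F, and the right-hand side is the Guba–Sapir normal form of this element. -/

import Mathlib

open scoped BigOperators
open scoped commutatorElement

/-- The two relators of the finite presentation of Thompson's group `F`:
`[x₀x₁⁻¹, x₀⁻¹x₁x₀]` and `[x₀x₁⁻¹, x₀⁻²x₁x₀²]`. -/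
def thompsonRels : Set (FreeGroup (Fin 2)) :=
  { ⁅FreeGroup.of (0 : Fin 2) * (FreeGroup.of (1 : Fin 2))⁻¹,
      (FreeGroup.of (0 : Fin 2))⁻¹ * FreeGroup.of (1 : Fin 2) * FreeGroup.of (0 : Fin 2)⁆,
    ⁅FreeGroup.of (0 : Fin 2) * (FreeGroup.of (1 : Fin 2))⁻¹,
      (FreeGroup.of (0 : Fin 2))⁻¹ ^ 2 * FreeGroup.of (1 : Fin 2) * FreeGroup.of (0 : Fin 2) ^ 2⁆ }

/-- Thompson's group `F`, as a presented group. -/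
abbrev ThompsonF : Type := PresentedGroup thompsonRels

/-- The generator `x₀`. -/
def x₀ : ThompsonF := PresentedGroup.of 0

/-- The generator `x₁`. -/
def x₁ : ThompsonF := PresentedGroup.of 1

/-- The canonical projection from the free group on `x₀, x₁` to Thompson's group. -/
def toF : List (Fin 2 × Bool) → ThompsonF := fun l =>
  PresentedGroup.mk thompsonRels (FreeGroup.mk l)

/-- The word representing `x_g^z` (`g = 0` or `1`), as a list of letters. -/
def powWord (g : Fin 2) (z : ℤ) : List (Fin 2 × Bool) :=
  List.replicate z.natAbs (g, decide (0 < z))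

/-- A word is reduced if it equals the reduced word of the free-group element
it represents. -/
def Reduced (l : List (Fin 2 × Bool)) : Prop :=
  (FreeGroup.mk l).toWord = l

/-- The forbidden subwords of Guba–Sapir: `x₁^{±1} x₀^i x₁` (`i > 0`) and
`x₁^{±1} x₀^{i+1} x₁⁻¹` (`i > 0`). -/
def ForbiddenWord (w : List (Fin 2 × Bool)) : Prop :=
  ∃ (s : Bool) (i : ℕ), 0 < i ∧
    (w = (1, s) :: (List.replicate i ((0 : Fin 2), true) ++ [((1 : Fin 2), true)]) ∨
     w = (1, s) :: (List.replicate (i + 1) ((0 : Fin 2), true) ++ [((1 : Fin 2), false)]))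

/-- A word is a (Guba–Sapir) normal form if it is reduced and contains no
forbidden subword. -/
def IsNormalForm (l : List (Fin 2 × Bool)) : Prop :=
  Reduced l ∧ ∀ w, w <:+: l → ¬ ForbiddenWord w

/-- `w` is the element of `F` whose normal form begins with the prefix `pre`. -/
def NFBeginsWith (w : ThompsonF) (pre : List (Fin 2 × Bool)) : Prop :=
  ∃ l, IsNormalForm l ∧ toF l = w ∧ pre <+: l

/-- `F₁ = {x₀^k : k ≥ 0}`. -/
def SetF₁ : Set ThompsonF := {w | ∃ k : ℕ, w = x₀ ^ k}

/-- `F₂`: normal form begins with `x₀^k x₁^l`, `k > 0`, `l ≠ 0`. -/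
def SetF₂ : Set ThompsonF :=
  {w | ∃ (k l : ℤ), 0 < k ∧ l ≠ 0 ∧ NFBeginsWith w (powWord 0 k ++ powWord 1 l)}

/-- `F₃`: normal form begins with `x₀^{-k} x₁^l`, `k > 0`, `l ∈ ℤ`. -/
def SetF₃ : Set ThompsonF :=
  {w | ∃ (k l : ℤ), 0 < k ∧ NFBeginsWith w (powWord 0 (-k) ++ powWord 1 l)}

/-- `F₄`: normal form begins with `x₁^k`, `k > 0`. -/
def SetF₄ : Set ThompsonF :=
  {w | ∃ k : ℤ, 0 < k ∧ NFBeginsWith w (powWord 1 k)}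

/-- `F₅`: normal form begins with `x₁^{-k}`, `k > 0`. -/
def SetF₅ : Set ThompsonF :=
  {w | ∃ k : ℤ, 0 < k ∧ NFBeginsWith w (powWord 1 (-k))}

namespace Statement9Aux

open List

/-! ### Group-theoretic part -/

/-- `XX n = x₀⁻ⁿ x₁ x₀ⁿ`, i.e. the generator `x_{n+1}` of the infinite presentation. -/
def XX (n : ℕ) : ThompsonF := x₀⁻¹ ^ n * x₁ * x₀ ^ n

lemma conj0 (k : ℕ) : x₀⁻¹ * XX k * x₀ = XX (k + 1) := by
  simp only [XX, pow_succ, pow_succ']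
  group

lemma X1_def : XX 1 = x₀⁻¹ * x₁ * x₀ := by simp [XX]

lemma mk_rel_one {r : FreeGroup (Fin 2)} (h : r ∈ thompsonRels) :
    PresentedGroup.mk thompsonRels r = 1 :=
  (QuotientGroup.eq_one_iff r).2 (Subgroup.subset_normalClosure h)

lemma D1 : x₁⁻¹ * XX 1 * x₁ = XX 2 := by
  have h := mk_rel_one (Set.mem_insert _ _)
  rw [map_commutatorElement, commutatorElement_eq_one_iff_mul_comm] at h
  simp only [map_mul, map_inv] at h
  have h' : (x₀ * x₁⁻¹) * (x₀⁻¹ * x₁ * x₀) = (x₀⁻¹ * x₁ * x₀) * (x₀ * x₁⁻¹) := h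
  rw [← conj0 1, X1_def]
  calc x₁⁻¹ * (x₀⁻¹ * x₁ * x₀) * x₁
      = x₀⁻¹ * ((x₀ * x₁⁻¹) * (x₀⁻¹ * x₁ * x₀)) * x₁ := by group
    _ = x₀⁻¹ * ((x₀⁻¹ * x₁ * x₀) * (x₀ * x₁⁻¹)) * x₁ := by rw [h']
    _ = x₀⁻¹ * (x₀⁻¹ * x₁ * x₀) * x₀ := by group

lemma D2 : x₁⁻¹ * XX 2 * x₁ = XX 3 := by
  have h := mk_rel_one (Set.mem_insert_of_mem _ rfl)
  rw [map_commutatorElement, commutatorElement_eq_one_iff_mul_comm] at h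
  simp only [map_mul, map_inv, map_pow] at h
  have h' : (x₀ * x₁⁻¹) * (x₀⁻¹ ^ 2 * x₁ * x₀ ^ 2) = (x₀⁻¹ ^ 2 * x₁ * x₀ ^ 2) * (x₀ * x₁⁻¹) := h
  rw [← conj0 2]
  have h2 : XX 2 = x₀⁻¹ ^ 2 * x₁ * x₀ ^ 2 := rfl
  rw [h2]
  calc x₁⁻¹ * (x₀⁻¹ ^ 2 * x₁ * x₀ ^ 2) * x₁
      = x₀⁻¹ * ((x₀ * x₁⁻¹) * (x₀⁻¹ ^ 2 * x₁ * x₀ ^ 2)) * x₁ := by group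
    _ = x₀⁻¹ * ((x₀⁻¹ ^ 2 * x₁ * x₀ ^ 2) * (x₀ * x₁⁻¹)) * x₁ := by rw [h']
    _ = x₀⁻¹ * (x₀⁻¹ ^ 2 * x₁ * x₀ ^ 2) * x₀ := by group

lemma Qlem {m : ℕ} (hD : x₁⁻¹ * XX m * x₁ = XX (m + 1)) :
    (XX 1)⁻¹ * XX (m + 1) * XX 1 = XX (m + 2) := by
  calc (XX 1)⁻¹ * XX (m + 1) * XX 1
      = (x₀⁻¹ * x₁ * x₀)⁻¹ * (x₀⁻¹ * XX m * x₀) * (x₀⁻¹ * x₁ * x₀) := by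
        rw [X1_def, conj0]
    _ = x₀⁻¹ * (x₁⁻¹ * XX m * x₁) * x₀ := by group
    _ = x₀⁻¹ * XX (m + 1) * x₀ := by rw [hD]
    _ = XX (m + 2) := conj0 _

lemma Rlem {m : ℕ} (hQ : (XX 1)⁻¹ * XX (m + 1) * XX 1 = XX (m + 2)) :
    (XX 2)⁻¹ * XX (m + 2) * XX 2 = XX (m + 3) := by
  calc (XX 2)⁻¹ * XX (m + 2) * XX 2
      = (x₀⁻¹ * XX 1 * x₀)⁻¹ * (x₀⁻¹ * XX (m + 1) * x₀) * (x₀⁻¹ * XX 1 * x₀) := by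
        rw [conj0, conj0]
    _ = x₀⁻¹ * ((XX 1)⁻¹ * XX (m + 1) * XX 1) * x₀ := by group
    _ = x₀⁻¹ * XX (m + 2) * x₀ := by rw [hQ]
    _ = XX (m + 3) := conj0 _

lemma Dstep {m : ℕ} (h1 : x₁⁻¹ * XX m * x₁ = XX (m + 1))
    (h2 : x₁⁻¹ * XX (m + 1) * x₁ = XX (m + 2)) :
    x₁⁻¹ * XX (m + 2) * x₁ = XX (m + 3) := by
  have hQ := Qlem h1
  calc x₁⁻¹ * XX (m + 2) * x₁
      = x₁⁻¹ * ((XX 1)⁻¹ * XX (m + 1) * XX 1) * x₁ := by rw [hQ]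
    _ = (x₁⁻¹ * XX 1 * x₁)⁻¹ * (x₁⁻¹ * XX (m + 1) * x₁) * (x₁⁻¹ * XX 1 * x₁) := by group
    _ = (XX 2)⁻¹ * XX (m + 2) * XX 2 := by rw [D1, h2]
    _ = XX (m + 3) := Rlem hQ

lemma Dall : ∀ k : ℕ, x₁⁻¹ * XX (k + 1) * x₁ = XX (k + 2) := by
  have key : ∀ k : ℕ, (x₁⁻¹ * XX (k + 1) * x₁ = XX (k + 2)) ∧
      (x₁⁻¹ * XX (k + 2) * x₁ = XX (k + 3)) := by
    intro k
    induction k with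
    | zero => exact ⟨D1, D2⟩
    | succ n ih => exact ⟨ih.2, Dstep ih.1 ih.2⟩
  exact fun k => (key k).1

lemma Xconj : ∀ k : ℕ, XX (k + 1) = x₁⁻¹ ^ k * XX 1 * x₁ ^ k := by
  intro k
  induction k with
  | zero => simp
  | succ n ih =>
    calc XX (n + 2) = x₁⁻¹ * XX (n + 1) * x₁ := (Dall n).symm
      _ = x₁⁻¹ * (x₁⁻¹ ^ n * XX 1 * x₁ ^ n) * x₁ := by rw [ih]
      _ = x₁⁻¹ ^ (n + 1) * XX 1 * x₁ ^ (n + 1) := by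
          simp only [pow_succ, pow_succ']
          group

lemma key_identity {n : ℕ} (hn : 1 ≤ n) :
    x₁⁻¹ * x₀ ^ n = x₀ ^ n * (x₁⁻¹ ^ (n - 1) * (x₀⁻¹ * x₁⁻¹ * x₀) * x₁ ^ (n - 1)) := by
  obtain ⟨m, rfl⟩ : ∃ m, n = m + 1 := ⟨n - 1, by omega⟩
  simp only [Nat.add_sub_cancel]
  have hE : x₀⁻¹ ^ (m + 1) * x₁ * x₀ ^ (m + 1) =
      x₁⁻¹ ^ m * (x₀⁻¹ * x₁ * x₀) * x₁ ^ m := by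
    have := Xconj m; rwa [X1_def] at this
  calc x₁⁻¹ * x₀ ^ (m + 1)
      = x₀ ^ (m + 1) * ((x₀⁻¹ ^ (m + 1) * x₁ * x₀ ^ (m + 1))⁻¹) := by group
    _ = x₀ ^ (m + 1) * ((x₁⁻¹ ^ m * (x₀⁻¹ * x₁ * x₀) * x₁ ^ m)⁻¹) := by rw [hE]
    _ = x₀ ^ (m + 1) * (x₁⁻¹ ^ m * (x₀⁻¹ * x₁⁻¹ * x₀) * x₁ ^ m) := by group

/-- The group identity, with integer exponents. -/
lemma main_identity (H L : ℤ) (hH : 2 ≤ H) :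
    x₁⁻¹ * x₀ ^ H * x₁ ^ L =
      x₀ ^ H * x₁ ^ (-H + 1) * x₀⁻¹ * x₁⁻¹ * x₀ * x₁ ^ (H + L - 1) := by
  set n : ℕ := H.toNat with hn
  have hnH : (n : ℤ) = H := Int.toNat_of_nonneg (by omega)
  have hn1 : 1 ≤ n := by omega
  have e0 : x₀ ^ H = x₀ ^ n := by rw [← hnH, zpow_natCast]
  have e1 : x₁ ^ (-H + 1) = x₁⁻¹ ^ (n - 1) := by
    rw [show -H + 1 = -(((n - 1 : ℕ) : ℤ)) by
      rw [Nat.cast_sub hn1]; omega]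
    rw [zpow_neg, zpow_natCast, inv_pow]
  have e2 : x₁ ^ (H + L - 1) = x₁ ^ (n - 1) * x₁ ^ L := by
    rw [show H + L - 1 = ((n - 1 : ℕ) : ℤ) + L by rw [Nat.cast_sub hn1]; omega]
    rw [zpow_add, zpow_natCast]
  rw [e0, e1, e2]
  have k := key_identity hn1
  calc x₁⁻¹ * x₀ ^ n * x₁ ^ L = (x₁⁻¹ * x₀ ^ n) * x₁ ^ L := by group
    _ = (x₀ ^ n * (x₁⁻¹ ^ (n - 1) * (x₀⁻¹ * x₁⁻¹ * x₀) * x₁ ^ (n - 1))) * x₁ ^ L := by rw [k]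
    _ = x₀ ^ n * x₁⁻¹ ^ (n - 1) * x₀⁻¹ * x₁⁻¹ * x₀ * (x₁ ^ (n - 1) * x₁ ^ L) := by group

/-! ### Evaluation of `toF` -/

lemma toF_append (l₁ l₂ : List (Fin 2 × Bool)) : toF (l₁ ++ l₂) = toF l₁ * toF l₂ := by
  unfold toF
  rw [← FreeGroup.mul_mk, map_mul]

lemma toF_nil : toF [] = 1 := by
  unfold toF
  rw [show FreeGroup.mk ([] : List (Fin 2 × Bool)) = 1 from FreeGroup.one_eq_mk.symm, map_one]

lemma toF_single_true (g : Fin 2) : toF [(g, true)] = PresentedGroup.of g := rfl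

lemma toF_single_false (g : Fin 2) : toF [(g, false)] = (PresentedGroup.of g)⁻¹ := by
  unfold toF
  have : FreeGroup.mk [(g, false)] = (FreeGroup.of g)⁻¹ := by
    rw [show FreeGroup.of g = FreeGroup.mk [(g, true)] from rfl, FreeGroup.inv_mk]
    rfl
  rw [this, map_inv]
  rfl

lemma toF_replicate (g : Fin 2) (b : Bool) (n : ℕ) :
    toF (List.replicate n (g, b)) = (cond b (PresentedGroup.of g) (PresentedGroup.of g)⁻¹) ^ n := by
  induction n with
  | zero => simpa using toF_nil
  | succ n ih =>
    rw [List.replicate_succ, show ((g,b) :: List.replicate n (g,b)) = [(g,b)] ++ List.replicate n (g,b) from rfl,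
      toF_append, ih, pow_succ']
    cases b <;> simp [toF_single_false, toF_single_true]

lemma toF_powWord (g : Fin 2) (z : ℤ) :
    toF (powWord g z) = (PresentedGroup.of g : ThompsonF) ^ z := by
  unfold powWord
  by_cases h : 0 < z
  · rw [decide_eq_true h, toF_replicate]
    simp only [cond_true]
    rw [← zpow_natCast, Int.natAbs_of_nonneg h.le]
  · rw [decide_eq_false h, toF_replicate]
    simp only [cond_false]
    rw [inv_pow, ← zpow_natCast, ← zpow_neg,
      show -((z.natAbs : ℤ)) = z by omega]

/-! ### Combinatorial part -/

lemma reduce_eq_self {α : Type*} [DecidableEq α] {l : List (α × Bool)}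
    (h : l.Chain' (fun a b => ¬(a.1 = b.1 ∧ a.2 = !b.2))) : FreeGroup.reduce l = l := by
  induction l with
  | nil => rfl
  | cons x l ih =>
    obtain ⟨h1, h2⟩ := List.isChain_cons.1 h
    rw [FreeGroup.reduce.cons, ih h2]
    cases l with
    | nil => rfl
    | cons y t =>
      simp only []
      rw [if_neg (h1 y rfl)]

lemma chain'_replicate_append {α : Type*} {R : α → α → Prop} {n : ℕ} {x : α} {L : List α}
    (h1 : R x x) (h2 : ∀ y ∈ L.head?, R x y) (hL : Chain' R L) :
    Chain' R (replicate n x ++ L) := by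
  induction n with
  | zero => simpa
  | succ n ih =>
    rw [replicate_succ, cons_append]
    refine List.isChain_cons.2 ⟨?_, ih⟩
    intro y hy
    cases n with
    | zero => simp only [replicate, nil_append] at hy; exact h2 y hy
    | succ m =>
      rw [replicate_succ, cons_append, head?_cons, Option.mem_some_iff] at hy
      exact hy ▸ h1

end Statement9Aux

open Statement9Aux List in
/-- formula (6). If `H ≥ 2`, `L ≠ 0`, `H + L ≤ 0`, then
`x₁⁻¹x₀ᴴx₁ᴸ = x₀ᴴx₁^{-H+1}x₀⁻¹x₁⁻¹x₀x₁^{H+L-1}` in `F`, and the right-hand side is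
the Guba–Sapir normal form of this element. -/
theorem statement9 (H L : ℤ) (hH : 2 ≤ H) (hL : L ≠ 0) (hHL : H + L ≤ 0) :
    x₁⁻¹ * x₀ ^ H * x₁ ^ L =
      x₀ ^ H * x₁ ^ (-H + 1) * x₀⁻¹ * x₁⁻¹ * x₀ * x₁ ^ (H + L - 1) ∧
    IsNormalForm
      (powWord 0 H ++ powWord 1 (-H + 1) ++ powWord 0 (-1) ++ powWord 1 (-1) ++
        powWord 0 1 ++ powWord 1 (H + L - 1)) ∧
    toF (powWord 0 H ++ powWord 1 (-H + 1) ++ powWord 0 (-1) ++ powWord 1 (-1) ++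
        powWord 0 1 ++ powWord 1 (H + L - 1)) =
      x₁⁻¹ * x₀ ^ H * x₁ ^ L := by
  have hid := main_identity H L hH
  -- normalize the word
  obtain ⟨a, ha⟩ : ∃ a, H.natAbs = a := ⟨_, rfl⟩
  obtain ⟨b, hb⟩ : ∃ b, (-H + 1).natAbs = b := ⟨_, rfl⟩
  obtain ⟨c, hc⟩ : ∃ c, (H + L - 1).natAbs = c := ⟨_, rfl⟩
  have ha2 : 2 ≤ a := by omega
  have hb1 : 1 ≤ b := by omega
  have hc1 : 1 ≤ c := by omega
  have w1 : powWord 0 H = replicate a ((0 : Fin 2), true) := by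
    rw [powWord, decide_eq_true (show (0:ℤ) < H by omega), ha]
  have w2 : powWord 1 (-H + 1) = replicate b ((1 : Fin 2), false) := by
    rw [powWord, decide_eq_false (show ¬ (0:ℤ) < -H + 1 by omega), hb]
  have w3 : powWord 0 (-1) = [((0 : Fin 2), false)] := rfl
  have w4 : powWord 1 (-1) = [((1 : Fin 2), false)] := rfl
  have w5 : powWord 0 1 = [((0 : Fin 2), true)] := rfl
  have w6 : powWord 1 (H + L - 1) = replicate c ((1 : Fin 2), false) := by
    rw [powWord, decide_eq_false (show ¬ (0:ℤ) < H + L - 1 by omega), hc]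
  have hW : powWord 0 H ++ powWord 1 (-H + 1) ++ powWord 0 (-1) ++ powWord 1 (-1) ++
      powWord 0 1 ++ powWord 1 (H + L - 1) =
      replicate a ((0 : Fin 2), true) ++ (replicate b ((1 : Fin 2), false) ++
        (((0 : Fin 2), false) :: ((1 : Fin 2), false) :: ((0 : Fin 2), true) ::
          replicate c ((1 : Fin 2), false))) := by
    rw [w1, w2, w3, w4, w5, w6]
    simp [List.append_assoc]
  refine ⟨hid, ⟨?_, ?_⟩, ?_⟩
  · -- Reduced
    rw [hW, Reduced, FreeGroup.toWord_mk]
    apply reduce_eq_self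
    obtain ⟨b', rfl⟩ : ∃ b', b = b' + 1 := ⟨b - 1, by omega⟩
    obtain ⟨c', rfl⟩ : ∃ c', c = c' + 1 := ⟨c - 1, by omega⟩
    apply chain'_replicate_append
    · simp
    · intro y hy
      rw [replicate_succ, cons_append, head?_cons, Option.mem_some_iff] at hy
      subst hy; simp
    apply chain'_replicate_append
    · simp
    · intro y hy
      rw [head?_cons, Option.mem_some_iff] at hy
      subst hy; simp
    refine List.isChain_cons.2 ⟨?_, ?_⟩
    · intro y hy
      rw [head?_cons, Option.mem_some_iff] at hy
      subst hy; simp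
    refine List.isChain_cons.2 ⟨?_, ?_⟩
    · intro y hy
      rw [head?_cons, Option.mem_some_iff] at hy
      subst hy; simp
    refine List.isChain_cons.2 ⟨?_, ?_⟩
    · intro y hy
      rw [replicate_succ, head?_cons, Option.mem_some_iff] at hy
      subst hy; simp
    · exact List.isChain_replicate_of_rel _ (by simp)
  · -- no forbidden subwords
    rw [hW]
    rintro w hwinf ⟨s, i, hi, hcase | hcase⟩
    · -- ends with (1, true): impossible since (1, true) never occurs
      have hmem : ((1 : Fin 2), true) ∈ w := by
        rw [hcase]
        simp
      have : ((1 : Fin 2), true) ∈ replicate a ((0 : Fin 2), true) ++ (replicate b ((1 : Fin 2), false) ++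
        (((0 : Fin 2), false) :: ((1 : Fin 2), false) :: ((0 : Fin 2), true) ::
          replicate c ((1 : Fin 2), false))) := hwinf.subset hmem
      simp only [List.mem_append, List.mem_replicate, List.mem_cons, List.mem_singleton,
        Prod.mk.injEq] at this
      simp at this
    · -- contains (1,s),(0,true),(0,true)
      obtain ⟨j, rfl⟩ : ∃ j, i = j + 1 := ⟨i - 1, by omega⟩
      have hpre : [((1:Fin 2), s), ((0:Fin 2), true), ((0:Fin 2), true)] <+: w := by
        rw [hcase]
        refine ⟨replicate j ((0:Fin 2), true) ++ [((1:Fin 2), false)], ?_⟩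
        simp [List.replicate_succ]
      have hsub : [((1:Fin 2), s), ((0:Fin 2), true), ((0:Fin 2), true)].Sublist
          (replicate a ((0 : Fin 2), true) ++ (replicate b ((1 : Fin 2), false) ++
        (((0 : Fin 2), false) :: ((1 : Fin 2), false) :: ((0 : Fin 2), true) ::
          replicate c ((1 : Fin 2), false)))) :=
        (hpre.isInfix.trans hwinf).sublist
      rw [List.sublist_append_iff] at hsub
      obtain ⟨l₁, l₂, heq, hl₁, hl₂⟩ := hsub
      rw [List.sublist_replicate_iff] at hl₁
      obtain ⟨k, hk, rfl⟩ := hl₁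
      rcases Nat.eq_zero_or_pos k with hk0 | hk0
      · subst hk0
        simp only [List.replicate, List.nil_append] at heq
        subst heq
        have hcount := hl₂.count_le (((0:Fin 2), true))
        have h2 : List.count (((0:Fin 2), true)) [((1:Fin 2), s), ((0:Fin 2), true), ((0:Fin 2), true)] = 2 := by
          simp [List.count_cons, Prod.ext_iff]
        have h1 : List.count (((0:Fin 2), true)) (replicate b ((1 : Fin 2), false) ++
            (((0 : Fin 2), false) :: ((1 : Fin 2), false) :: ((0 : Fin 2), true) ::
              replicate c ((1 : Fin 2), false))) = 1 := by
          simp [List.count_append, List.count_replicate, List.count_cons]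
        rw [h2, h1] at hcount
        omega
      · obtain ⟨k', rfl⟩ : ∃ k', k = k' + 1 := ⟨k - 1, by omega⟩
        rw [List.replicate_succ, List.cons_append] at heq
        injection heq with h1 h2
        exact absurd (congrArg Prod.fst h1) (by decide : ¬(1 : Fin 2) = 0)
  · -- toF evaluation
    rw [toF_append, toF_append, toF_append, toF_append, toF_append]
    rw [toF_powWord, toF_powWord, toF_powWord, toF_powWord, toF_powWord, toF_powWord]
    rw [hid]
    show (x₀ : ThompsonF) ^ H * x₁ ^ (-H+1) * x₀ ^ (-1:ℤ) * x₁ ^ (-1:ℤ) * x₀ ^ (1:ℤ)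
        * x₁ ^ (H + L - 1) = _
    rw [zpow_neg_one, zpow_neg_one, zpow_one]
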